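/- Let F be the N×N DFT matrix with entries F_{j,k} = e^{2πi jk/N}/√N, let M ⊆ {1,…,N} be a nonempty proper subset, and let Φ = √(N/|M|)·F_M. Then the mean square coherence satisfies μ̄² = (N - |M|)/((N-1)|M|), i.e., (1/(N(N-1)))∑_{j≠k}|⟨φ_j,φ_k⟩|² = (N-|M|)/((N-1)|M|). -/

import Mathlib

open Complex

lemma aux_sum_zpow (N : ℕ) (hN : 0 < N) (d : ℤ) :
    ∑ j : Fin N, Complex.exp (2 * Real.pi * Complex.I / N) ^ ((j : ℤ) * d) =
      if (N : ℤ) ∣ d then (N : ℂ) else 0 := by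
  set ω : ℂ := Complex.exp (2 * Real.pi * Complex.I / N) with hω
  have hprim : IsPrimitiveRoot ω N := Complex.isPrimitiveRoot_exp N hN.ne'
  have hrw : ∀ j : Fin N, ω ^ ((j : ℤ) * d) = (ω ^ d) ^ (j : ℕ) := by
    intro j
    rw [mul_comm, zpow_mul, ← zpow_natCast (ω ^ d)]
  simp only [hrw]
  rw [Fin.sum_univ_eq_sum_range (fun j => (ω ^ d) ^ j)]
  by_cases hdvd : (N : ℤ) ∣ d
  · have h1 : ω ^ d = 1 := (hprim.zpow_eq_one_iff_dvd d).mpr hdvd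
    simp [h1, if_pos hdvd]
  · have h1 : ω ^ d ≠ 1 := fun h => hdvd ((hprim.zpow_eq_one_iff_dvd d).mp h)
    rw [geom_sum_eq h1, if_neg hdvd]
    have hpow : (ω ^ d) ^ N = 1 := by
      rw [← zpow_natCast (ω ^ d), ← zpow_mul, mul_comm, zpow_mul,
        zpow_natCast, hprim.pow_eq_one, one_zpow]
    simp [hpow]

lemma aux_dvd_iff (N : ℕ) (t s : Fin N) : ((N : ℤ) ∣ ((t : ℤ) - (s : ℤ))) ↔ t = s := by
  constructor
  · intro h
    have ht := t.isLt; have hs := s.isLt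
    have h0 : (t : ℤ) - (s : ℤ) = 0 := by
      refine Int.eq_zero_of_abs_lt_dvd h ?_
      rw [abs_sub_lt_iff]
      constructor <;> push_cast <;> omega
    have : (t : ℕ) = (s : ℕ) := by omega
    exact Fin.ext this
  · rintro rfl; simp

theorem stmt_6 (N : ℕ) (hN : 0 < N) (M : Finset (Fin N)) (hM : M.Nonempty)
    (hMproper : M ≠ Finset.univ)
    (φ : Fin N → Fin N → ℂ)
    (hφ : ∀ j t, φ j t = (Real.sqrt ((N : ℝ) / M.card) : ℂ) *
      (Complex.exp (2 * Real.pi * Complex.I * (j : ℕ) * (t : ℕ) / N) / (Real.sqrt N : ℂ))) :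
    (1 / ((N : ℝ) * ((N : ℝ) - 1))) *
        ∑ p ∈ (Finset.univ : Finset (Fin N)).offDiag,
          (‖∑ t ∈ M, starRingEnd ℂ (φ p.1 t) * φ p.2 t‖) ^ 2
      = ((N : ℝ) - M.card) / (((N : ℝ) - 1) * M.card) := by
  classical
  set m : ℕ := M.card with hmdef
  have hmpos : 0 < m := Finset.card_pos.mpr hM
  have hmN : m < N := by
    have := (Finset.card_lt_iff_ne_univ M).mpr hMproper
    simpa using this
  have hN1 : 1 < N := lt_of_le_of_lt hmpos hmN
  set ω : ℂ := Complex.exp (2 * Real.pi * Complex.I / N) with hωdef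
  have hω0 : ω ≠ 0 := Complex.exp_ne_zero _
  have hNC : (N : ℂ) ≠ 0 := by exact_mod_cast Nat.cast_ne_zero.mpr hN.ne'
  have hmC : (m : ℂ) ≠ 0 := by exact_mod_cast Nat.cast_ne_zero.mpr hmpos.ne'
  -- inner product formula
  have hinner : ∀ j k : Fin N, ∑ t ∈ M, starRingEnd ℂ (φ j t) * φ k t
      = (1 / (m : ℂ)) * ∑ t ∈ M, ω ^ (((k : ℤ) - (j : ℤ)) * (t : ℤ)) := by
    intro j k
    rw [Finset.mul_sum]
    refine Finset.sum_congr rfl fun t _ => ?_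
    rw [hφ, hφ]
    have hconj : (starRingEnd ℂ) ((Real.sqrt ((N : ℝ) / m) : ℂ) *
        (Complex.exp (2 * Real.pi * Complex.I * (j : ℕ) * (t : ℕ) / N) / (Real.sqrt N : ℂ)))
        = (Real.sqrt ((N : ℝ) / m) : ℂ) *
        (Complex.exp (-(2 * Real.pi * Complex.I * (j : ℕ) * (t : ℕ) / N)) / (Real.sqrt N : ℂ)) := by
      rw [map_mul, map_div₀, Complex.conj_ofReal, Complex.conj_ofReal, ← Complex.exp_conj]
      congr 2
      simp [map_mul, map_div₀, Complex.conj_I, map_ofNat]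
      ring
    rw [hconj]
    have hz : ω ^ (((k : ℤ) - (j : ℤ)) * (t : ℤ))
        = Complex.exp (((((k : ℤ) - (j : ℤ)) * (t : ℤ)) : ℂ) * (2 * Real.pi * Complex.I / N)) := by
      rw [hωdef, ← Complex.exp_int_mul]
      congr 1
      push_cast
      ring
    rw [hz]
    have hexp : Complex.exp (-(2 * Real.pi * Complex.I * (j : ℕ) * (t : ℕ) / N)) *
        Complex.exp (2 * Real.pi * Complex.I * (k : ℕ) * (t : ℕ) / N)
        = Complex.exp (((((k : ℤ) - (j : ℤ)) * (t : ℤ)) : ℂ) * (2 * Real.pi * Complex.I / N)) := by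
      rw [← Complex.exp_add]
      congr 1
      push_cast
      ring
    have hsq1 : ((Real.sqrt ((N : ℝ) / m) : ℂ)) * ((Real.sqrt ((N : ℝ) / m) : ℂ))
        = (((N : ℝ) / m : ℝ) : ℂ) := by
      rw [← Complex.ofReal_mul, Real.mul_self_sqrt (by positivity)]
    have hsq2 : ((Real.sqrt (N : ℝ) : ℂ)) * ((Real.sqrt (N : ℝ) : ℂ)) = (N : ℂ) := by
      rw [← Complex.ofReal_mul, Real.mul_self_sqrt (by positivity)]
      push_cast; ring
    calc (Real.sqrt ((N : ℝ) / m) : ℂ) *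
          (Complex.exp (-(2 * Real.pi * Complex.I * (j : ℕ) * (t : ℕ) / N)) / (Real.sqrt N : ℂ)) *
          ((Real.sqrt ((N : ℝ) / m) : ℂ) *
          (Complex.exp (2 * Real.pi * Complex.I * (k : ℕ) * (t : ℕ) / N) / (Real.sqrt N : ℂ)))
        = ((Real.sqrt ((N : ℝ) / m) : ℂ) * (Real.sqrt ((N : ℝ) / m) : ℂ)) /
          ((Real.sqrt (N : ℝ) : ℂ) * (Real.sqrt (N : ℝ) : ℂ)) *
          (Complex.exp (-(2 * Real.pi * Complex.I * (j : ℕ) * (t : ℕ) / N)) *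
           Complex.exp (2 * Real.pi * Complex.I * (k : ℕ) * (t : ℕ) / N)) := by ring
      _ = (1 / (m : ℂ)) * Complex.exp (((((k : ℤ) - (j : ℤ)) * (t : ℤ)) : ℂ) *
            (2 * Real.pi * Complex.I / N)) := by
          rw [hsq1, hsq2, hexp]
          congr 1
          push_cast
          field_simp
  -- conjugate of the character sum
  have hconjT : ∀ j k : Fin N,
      (starRingEnd ℂ) (∑ t ∈ M, ω ^ (((k : ℤ) - (j : ℤ)) * (t : ℤ)))
      = ∑ s ∈ M, ω ^ (-(((k : ℤ) - (j : ℤ)) * (s : ℤ))) := by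
    intro j k
    rw [map_sum]
    refine Finset.sum_congr rfl fun s _ => ?_
    rw [map_zpow₀]
    have : (starRingEnd ℂ) ω = ω⁻¹ := by
      rw [hωdef, ← Complex.exp_conj, ← Complex.exp_neg]
      congr 1
      simp [map_mul, map_div₀, Complex.conj_I, map_ofNat]
      ring
    rw [this, inv_zpow, ← zpow_neg]
  -- row sums
  have hrow : ∀ j : Fin N,
      ∑ k : Fin N, ((∑ t ∈ M, ω ^ (((k : ℤ) - (j : ℤ)) * (t : ℤ))) *
        (∑ s ∈ M, ω ^ (-(((k : ℤ) - (j : ℤ)) * (s : ℤ)))))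
      = (N : ℂ) * m := by
    intro j
    have hswap : ∀ k : Fin N,
        (∑ t ∈ M, ω ^ (((k : ℤ) - (j : ℤ)) * (t : ℤ))) *
        (∑ s ∈ M, ω ^ (-(((k : ℤ) - (j : ℤ)) * (s : ℤ))))
        = ∑ t ∈ M, ∑ s ∈ M, ω ^ ((j : ℤ) * ((s : ℤ) - (t : ℤ))) *
            ω ^ ((k : ℤ) * ((t : ℤ) - (s : ℤ))) := by
      intro k
      rw [Finset.sum_mul_sum]
      refine Finset.sum_congr rfl fun t _ => Finset.sum_congr rfl fun s _ => ?_
      rw [← zpow_add₀ hω0, ← zpow_add₀ hω0]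
      congr 1
      ring
    simp only [hswap]
    rw [Finset.sum_comm]
    have hinner2 : ∀ t : Fin N, t ∈ M →
        ∑ k : Fin N, ∑ s ∈ M, ω ^ ((j : ℤ) * ((s : ℤ) - (t : ℤ))) *
          ω ^ ((k : ℤ) * ((t : ℤ) - (s : ℤ))) = (N : ℂ) := by
      intro t ht
      rw [Finset.sum_comm]
      have : ∀ s : Fin N, s ∈ M →
          ∑ k : Fin N, ω ^ ((j : ℤ) * ((s : ℤ) - (t : ℤ))) *
            ω ^ ((k : ℤ) * ((t : ℤ) - (s : ℤ)))
          = if t = s then (N : ℂ) else 0 := by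
        intro s hs
        rw [← Finset.mul_sum, aux_sum_zpow N hN ((t : ℤ) - (s : ℤ))]
        simp only [aux_dvd_iff]
        by_cases hts : t = s
        · subst hts; simp
        · simp [hts]
      rw [Finset.sum_congr rfl this, Finset.sum_ite_eq M t (fun _ => (N : ℂ)), if_pos ht]
    rw [Finset.sum_congr rfl hinner2, Finset.sum_const, nsmul_eq_mul, hmdef, mul_comm]
  -- the full product sum over all pairs
  have hfull : ∑ p ∈ (Finset.univ : Finset (Fin N)) ×ˢ (Finset.univ : Finset (Fin N)),
      ((∑ t ∈ M, ω ^ (((p.2 : ℤ) - (p.1 : ℤ)) * (t : ℤ))) *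
       (∑ s ∈ M, ω ^ (-(((p.2 : ℤ) - (p.1 : ℤ)) * (s : ℤ)))))
      = (N : ℂ) ^ 2 * m := by
    rw [Finset.sum_product]
    rw [Finset.sum_congr rfl (fun j _ => hrow j), Finset.sum_const]
    simp [Finset.card_univ, pow_two]
    ring
  -- the diagonal sum
  have hdiag : ∑ p ∈ (Finset.univ : Finset (Fin N)).diag,
      ((∑ t ∈ M, ω ^ (((p.2 : ℤ) - (p.1 : ℤ)) * (t : ℤ))) *
       (∑ s ∈ M, ω ^ (-(((p.2 : ℤ) - (p.1 : ℤ)) * (s : ℤ)))))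
      = (N : ℂ) * (m : ℂ) ^ 2 := by
    rw [Finset.sum_diag]
    have : ∀ a : Fin N,
        ((∑ t ∈ M, ω ^ (((a : ℤ) - (a : ℤ)) * (t : ℤ))) *
         (∑ s ∈ M, ω ^ (-(((a : ℤ) - (a : ℤ)) * (s : ℤ))))) = (m : ℂ) ^ 2 := by
      intro a
      simp [sub_self, pow_two]
      rfl
    rw [Finset.sum_congr rfl (fun a _ => this a), Finset.sum_const]
    simp [Finset.card_univ]
  -- offDiag sum
  have hoffg : ∑ p ∈ (Finset.univ : Finset (Fin N)).offDiag,
      ((∑ t ∈ M, ω ^ (((p.2 : ℤ) - (p.1 : ℤ)) * (t : ℤ))) *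
       (∑ s ∈ M, ω ^ (-(((p.2 : ℤ) - (p.1 : ℤ)) * (s : ℤ)))))
      = (N : ℂ) ^ 2 * m - (N : ℂ) * (m : ℂ) ^ 2 := by
    have hu := Finset.sum_union (f := fun p : Fin N × Fin N =>
        ((∑ t ∈ M, ω ^ (((p.2 : ℤ) - (p.1 : ℤ)) * (t : ℤ))) *
         (∑ s ∈ M, ω ^ (-(((p.2 : ℤ) - (p.1 : ℤ)) * (s : ℤ))))))
      (Finset.disjoint_diag_offDiag (Finset.univ : Finset (Fin N)))
    rw [Finset.diag_union_offDiag, hfull, hdiag] at hu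
    rw [eq_sub_iff_add_eq, add_comm]
    exact hu.symm
  -- rewrite each |inner|^2
  have habs : ∀ p : Fin N × Fin N,
      (‖∑ t ∈ M, starRingEnd ℂ (φ p.1 t) * φ p.2 t‖) ^ 2
      = (1 / (m : ℝ)) ^ 2 *
        (((∑ t ∈ M, ω ^ (((p.2 : ℤ) - (p.1 : ℤ)) * (t : ℤ))) *
          (∑ s ∈ M, ω ^ (-(((p.2 : ℤ) - (p.1 : ℤ)) * (s : ℤ))))).re) := by
    intro p
    rw [hinner p.1 p.2, ← hconjT p.1 p.2, Complex.mul_conj]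
    rw [norm_mul, mul_pow, Complex.sq_norm, Complex.ofReal_re]
    have h1 : (‖1 / (m : ℂ)‖) ^ 2 = (1 / (m : ℝ)) ^ 2 := by
      rw [norm_div, norm_one, Complex.norm_natCast]
    simp only [← Complex.sq_norm]
    rw [h1]
  simp only [habs]
  rw [← Finset.mul_sum, ← Complex.re_sum, hoffg]
  have hre0 : ((N : ℂ) ^ 2 * m - (N : ℂ) * (m : ℂ) ^ 2)
      = (((N : ℝ) ^ 2 * m - (N : ℝ) * (m : ℝ) ^ 2 : ℝ) : ℂ) := by
    push_cast
    ring
  rw [hre0, Complex.ofReal_re]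
  have hNR : (0 : ℝ) < N := by exact_mod_cast hN
  have hmR : (0 : ℝ) < m := by exact_mod_cast hmpos
  have hN1R : (1 : ℝ) < N := by exact_mod_cast hN1
  have h1 : (N : ℝ) - 1 ≠ 0 := by linarith
  have h2 : (N : ℝ) ≠ 0 := ne_of_gt hNR
  have h3 : (m : ℝ) ≠ 0 := ne_of_gt hmR
  rw [eq_div_iff (by nlinarith : ((N : ℝ) - 1) * m ≠ 0)]
  field_simp
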